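/- Let ε > 0, ρ > 0, and k ≥ 1. Let {P̃_1,…,P̃_k} be a partition of P into nonempty clusters; for each i let μ_i ∈ ℝ^d attain opt(P̃_i,1) and let p*_i ∈ P̃_i maximize w_p·‖p−μ_i‖^z over P̃_i. Suppose (modeling the costs of a k-clustering algorithm satisfying Assumptions 1–3) there exist real numbers A and a_1,…,a_k with A ≤ Σ_{i=1}^k a_i, a_i ≤ c(P̃_i,{μ_i,p*_i}) for every i, and Σ_{i=1}^k c(P̃_i,{μ_i}) − A ≤ w_min·(ε/ρ)^z. Then for every set X of models and every per-point cost function cost : ℝ^d × X → ℝ with cost(p,x) ≥ 1 for all p and x, and ρ-Lipschitz in the point argument, S = {μ_1,…,μ_k} with weights u_i := Σ_{p∈P̃_i} w_p is an ε-coreset for P w.r.t. the sum cost, and S is an ε-coreset w.r.t. the maximum cost. (Theorem 2) -/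

import Mathlib

open scoped Classical

/-- Points of `ℝ^d` with the Euclidean norm. -/
abbrev Pt (d : ℕ) := EuclideanSpace ℝ (Fin d)

/-- Weighted clustering cost `c(P,Q) = Σ_{p∈P} w_p · (min_{q∈Q} ‖p−q‖)^z`
(the minimum is expressed as an infimum, which agrees with the minimum
for nonempty finite `Q`). -/
noncomputable def cCost {d : ℕ} (z : ℝ) (w : Pt d → ℝ) (P Q : Finset (Pt d)) : ℝ :=
  ∑ p ∈ P, w p * (sInf ((fun q => dist p q) '' (Q : Set (Pt d)))) ^ z

/-- Optimal `k`-clustering cost `opt(P,k) = inf { c(P,Q) : |Q| = k }`. -/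
noncomputable def optCost {d : ℕ} (z : ℝ) (w : Pt d → ℝ) (P : Finset (Pt d)) (k : ℕ) : ℝ :=
  sInf { r : ℝ | ∃ Q : Finset (Pt d), Q.card = k ∧ r = cCost z w P Q }

/-- Theorem 2: let `{Pc i}` be a partition of `P` into nonempty clusters, `μ i` the optimal
1-clustering center of `Pc i`, and `p*_i` a maximizer of `w_p·‖p−μ i‖^z` over `Pc i`.
Suppose (modeling Assumptions 1–3) there are reals `A` and `a i` with `A ≤ Σ a i`,
`a i ≤ c(Pc i, {μ i, p*_i})`, and `Σ_i c(Pc i,{μ i}) − A ≤ w_min·(ε/ρ)^z`. Then for every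
model set `X` and every per-point cost that is `≥ 1` and `ρ`-Lipschitz in the point,
`{μ i}` with weights `Σ_{p∈Pc i} w_p` is an `ε`-coreset for `P` w.r.t. the sum cost and
the maximum cost. -/
theorem theorem2 {d : ℕ} (z : ℝ) (hz : 0 < z)
    (P : Finset (Pt d)) (hP : P.Nonempty)
    (w : Pt d → ℝ) (hw : ∀ p ∈ P, 0 < w p)
    (k : ℕ) (hk : 0 < k)
    (Pc : Fin k → Finset (Pt d))
    (hne : ∀ i, (Pc i).Nonempty)
    (hdisj : ∀ i j, i ≠ j → Disjoint (Pc i) (Pc j))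
    (hcover : P = Finset.univ.biUnion Pc)
    (μ : Fin k → Pt d) (hμ : ∀ i, cCost z w (Pc i) {μ i} = optCost z w (Pc i) 1)
    (pstar : Fin k → Pt d) (hpstarM : ∀ i, pstar i ∈ Pc i)
    (hpstar : ∀ i, ∀ p ∈ Pc i,
      w p * dist p (μ i) ^ z ≤ w (pstar i) * dist (pstar i) (μ i) ^ z)
    (A : ℝ) (a : Fin k → ℝ)
    (hA : A ≤ ∑ i, a i)
    (ha : ∀ i, a i ≤ cCost z w (Pc i) {μ i, pstar i})
    (ε ρ : ℝ) (hε : 0 < ε) (hρ : 0 < ρ)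
    (hgap : (∑ i, cCost z w (Pc i) {μ i}) - A ≤ P.inf' hP w * (ε / ρ) ^ z)
    (X : Type*) (cost : Pt d → X → ℝ)
    (hc1 : ∀ p x, 1 ≤ cost p x)
    (hlip : ∀ (x : X) (p p' : Pt d), |cost p x - cost p' x| ≤ ρ * dist p p') :
    ∀ x : X,
      ((1 - ε) * (∑ p ∈ P, w p * cost p x) ≤ (∑ i, (∑ p ∈ Pc i, w p) * cost (μ i) x) ∧
       (∑ i, (∑ p ∈ Pc i, w p) * cost (μ i) x) ≤ (1 + ε) * (∑ p ∈ P, w p * cost p x)) ∧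
      ((1 - ε) * P.sup' hP (fun p => cost p x)
          ≤ Finset.univ.sup' (Finset.univ_nonempty_iff.mpr ⟨⟨0, hk⟩⟩) (fun i => cost (μ i) x) ∧
       Finset.univ.sup' (Finset.univ_nonempty_iff.mpr ⟨⟨0, hk⟩⟩) (fun i => cost (μ i) x)
          ≤ (1 + ε) * P.sup' hP (fun p => cost p x)) := by

  have hsingle : ∀ (Q : Finset (Pt d)) (c : Pt d),
      cCost z w Q {c} = ∑ p ∈ Q, w p * dist p c ^ z := by
    intro Q c
    unfold cCost
    refine Finset.sum_congr rfl fun p _ => ?_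
    simp [Set.image_singleton]
  have hpair : ∀ (Q : Finset (Pt d)) (c c' : Pt d),
      cCost z w Q {c, c'} = ∑ p ∈ Q, w p * (min (dist p c) (dist p c')) ^ z := by
    intro Q c c'
    unfold cCost
    refine Finset.sum_congr rfl fun p _ => ?_
    congr 2
    rw [Finset.coe_insert, Finset.coe_singleton, Set.image_pair, csInf_pair]
  have hmemP : ∀ i, ∀ p ∈ Pc i, p ∈ P := by
    intro i p hp; rw [hcover]; exact Finset.mem_biUnion.mpr ⟨i, Finset.mem_univ i, hp⟩
  set W := P.inf' hP w with hW
  have hkey : ∀ i, w (pstar i) * dist (pstar i) (μ i) ^ z ≤ W * (ε/ρ)^z := by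
    intro i
    set D : Fin k → ℝ := fun j =>
      cCost z w (Pc j) {μ j} - cCost z w (Pc j) {μ j, pstar j} with hD
    have hDlb : ∀ j, w (pstar j) * dist (pstar j) (μ j) ^ z ≤ D j := by
      intro j
      rw [hD]; simp only
      rw [hsingle, hpair, ← Finset.sum_sub_distrib]
      have hnn : ∀ p ∈ Pc j, 0 ≤ w p * dist p (μ j) ^ z
          - w p * (min (dist p (μ j)) (dist p (pstar j))) ^ z := by
        intro p hp
        have h1 : (min (dist p (μ j)) (dist p (pstar j))) ^ z ≤ dist p (μ j) ^ z :=
          Real.rpow_le_rpow (le_min dist_nonneg dist_nonneg) (min_le_left _ _) hz.le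
        nlinarith [(hw p (hmemP j p hp))]
      refine le_trans ?_ (Finset.single_le_sum hnn (hpstarM j))
      have hmin : min (dist (pstar j) (μ j)) (dist (pstar j) (pstar j)) = 0 := by
        simp [dist_self, min_eq_right dist_nonneg]
      rw [hmin, Real.zero_rpow hz.ne', mul_zero, sub_zero]
    have hDnn : ∀ j ∈ Finset.univ, (0:ℝ) ≤ D j := fun j _ =>
      le_trans (mul_nonneg (hw _ (hmemP j _ (hpstarM j))).le
        (Real.rpow_nonneg dist_nonneg z)) (hDlb j)
    have hsum : ∑ j, D j ≤ W * (ε/ρ)^z := by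
      have h1 : A ≤ ∑ j, cCost z w (Pc j) {μ j, pstar j} :=
        le_trans hA (Finset.sum_le_sum fun j _ => ha j)
      have h2 : ∑ j, D j = (∑ j, cCost z w (Pc j) {μ j})
          - ∑ j, cCost z w (Pc j) {μ j, pstar j} := by
        rw [hD, Finset.sum_sub_distrib]
      linarith
    exact le_trans (hDlb i) (le_trans (Finset.single_le_sum hDnn (Finset.mem_univ i)) hsum)
  have hdist : ∀ i, ∀ p ∈ Pc i, dist p (μ i) ≤ ε / ρ := by
    intro i p hp
    have hwp := hw p (hmemP i p hp)
    have hWle : W ≤ w p := Finset.inf'_le w (hmemP i p hp)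
    have h1 : w p * dist p (μ i) ^ z ≤ w p * (ε/ρ)^z := by
      have ha1 := le_trans (hpstar i p hp) (hkey i)
      have h2 : W * (ε/ρ)^z ≤ w p * (ε/ρ)^z :=
        mul_le_mul_of_nonneg_right hWle (Real.rpow_nonneg (div_pos hε hρ).le z)
      linarith
    have h2 : dist p (μ i) ^ z ≤ (ε/ρ)^z := le_of_mul_le_mul_left h1 hwp
    by_contra h
    push_neg at h
    exact absurd h2 (not_le.mpr (Real.rpow_lt_rpow (div_pos hε hρ).le h hz))
  intro x
  have hpt : ∀ i, ∀ p ∈ Pc i,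
      (1 - ε) * cost p x ≤ cost (μ i) x ∧ cost (μ i) x ≤ (1 + ε) * cost p x := by
    intro i p hp
    have h1 : |cost p x - cost (μ i) x| ≤ ε := by
      refine le_trans (hlip x p (μ i)) ?_
      have hd1 := hdist i p hp
      calc ρ * dist p (μ i) ≤ ρ * (ε/ρ) := by nlinarith
        _ = ε := by field_simp
    rw [abs_le] at h1
    have h2 := hc1 p x
    constructor <;> nlinarith [h1.1, h1.2]
  constructor
  · have hd : ((Finset.univ : Finset (Fin k)) : Set (Fin k)).PairwiseDisjoint Pc :=
      fun i _ j _ hij => hdisj i j hij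
    have hs : ∀ f : Pt d → ℝ, ∑ p ∈ P, f p = ∑ i, ∑ p ∈ Pc i, f p := by
      intro f; rw [hcover]; exact Finset.sum_biUnion hd
    constructor
    · rw [hs (fun p => w p * cost p x), Finset.mul_sum]
      refine Finset.sum_le_sum fun i _ => ?_
      rw [Finset.sum_mul, Finset.mul_sum]
      refine Finset.sum_le_sum fun p hp => ?_
      have h1 := (hpt i p hp).1
      have hwp := (hw p (hmemP i p hp)).le
      nlinarith
    · rw [hs (fun p => w p * cost p x), Finset.mul_sum]
      refine Finset.sum_le_sum fun i _ => ?_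
      rw [Finset.sum_mul, Finset.mul_sum]
      refine Finset.sum_le_sum fun p hp => ?_
      have h1 := (hpt i p hp).2
      have hwp := (hw p (hmemP i p hp)).le
      nlinarith
  · constructor
    · obtain ⟨p0, hp0, hp0eq⟩ := Finset.exists_mem_eq_sup' hP (fun p => cost p x)
      obtain ⟨i, _, hpi⟩ := Finset.mem_biUnion.mp (hcover ▸ hp0)
      rw [hp0eq]
      exact le_trans (hpt i p0 hpi).1 (Finset.le_sup' (fun i => cost (μ i) x) (Finset.mem_univ i))
    · refine Finset.sup'_le _ _ fun i _ => ?_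
      obtain ⟨p, hp⟩ := hne i
      refine le_trans (hpt i p hp).2 ?_
      have hle : cost p x ≤ P.sup' hP (fun p => cost p x) := Finset.le_sup' (fun p => cost p x) (hmemP i p hp)
      nlinarith
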